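/- Let K ⊂ ℝ² be a compact convex set with nonempty interior such that K = −K. Assume that (1,0) and (0,1) lie on the boundary of K, and that vol(K ∩ {(x,y) : x ≥ 0, y ≥ 0}) = vol(K ∩ {(x,y) : x ≤ 0, y ≥ 0}) = vol(K)/4. Then vol(K) · vol(K°) ≥ 8, where vol denotes 2-dimensional Lebesgue measure. -/

import Mathlib

open MeasureTheory Real Set
open scoped RealInnerProductSpace

noncomputable section

/-- Euclidean plane. -/
abbrev E2 := EuclideanSpace ℝ (Fin 2)

/-- The point `(a, b)` of `ℝ²`. -/
def pt2 (a b : ℝ) : E2 := (WithLp.equiv 2 (Fin 2 → ℝ)).symm ![a, b]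

/-- The polar body `K° = {y : ⟪x, y⟫ ≤ 1 for all x ∈ K}`. -/
def polarBody2 (K : Set E2) : Set E2 := {y : E2 | ∀ x ∈ K, ⟪x, y⟫ ≤ 1}

/-- The square `[-1,1]²`. -/
def square : Set E2 := {x : E2 | ∀ i, x i ∈ Icc (-1:ℝ) 1}

open scoped ENNReal

namespace MahlerAux

@[simp] lemma pt2_apply_zero (a b : ℝ) : pt2 a b 0 = a := rfl
@[simp] lemma pt2_apply_one (a b : ℝ) : pt2 a b 1 = b := rfl

lemma inner2 (x y : E2) : ⟪ x, y ⟫ = x 0 * y 0 + x 1 * y 1 := by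
  simp [PiLp.inner_apply, Fin.sum_univ_two]; ring

/-- coordinate projection as a linear map -/
def projL (i : Fin 2) : E2 →ₗ[ℝ] ℝ :=
  (LinearMap.proj i).comp (WithLp.linearEquiv 2 ℝ (Fin 2 → ℝ)).toLinearMap

@[simp] lemma projL_apply (i : Fin 2) (x : E2) : projL i x = x i := rfl

/-- lines have measure zero -/
lemma null_line (f : E2 →ₗ[ℝ] ℝ) (y : E2) (hy : f y ≠ 0) (c : ℝ) :
    volume {x : E2 | f x = c} = 0 := by
  have hker : volume (LinearMap.ker f : Set E2) = 0 :=
    Measure.addHaar_submodule _ _ (by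
      intro h
      exact hy (by simp [LinearMap.ker_eq_top.mp h]))
  set x₀ : E2 := (c / f y) • y with hx₀
  have hfx₀ : f x₀ = c := by
    rw [hx₀, _root_.map_smul, smul_eq_mul, div_mul_cancel₀ _ hy]
  have hset : {x : E2 | f x = c} = (fun x => -x₀ + x) ⁻¹' (LinearMap.ker f : Set E2) := by
    ext x
    simp only [mem_setOf_eq, mem_preimage, SetLike.mem_coe, LinearMap.mem_ker, map_add, map_neg,
      hfx₀]
    constructor
    · intro h; rw [h]; ring
    · intro h; linarith
  rw [hset, measure_preimage_add, hker]

/-- The basic triangle `{x ≥ 0, y ≥ 0, x + y ≤ 1}` has volume at least `1/2`. -/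
lemma vol_Tset : ENNReal.ofReal (1/2) ≤ volume {x : E2 | 0 ≤ x 0 ∧ 0 ≤ x 1 ∧ x 0 + x 1 ≤ 1} := by
  set Tset := {x : E2 | 0 ≤ x 0 ∧ 0 ≤ x 1 ∧ x 0 + x 1 ≤ 1} with hTset
  set R := (fun x : E2 => pt2 1 1 - x) ⁻¹' Tset with hR
  have hsq : volume {x : E2 | ∀ i, x i ∈ Icc (0:ℝ) 1} = 1 := by
    have : {x : E2 | ∀ i, x i ∈ Icc (0:ℝ) 1}
        = (MeasurableEquiv.toLp 2 (Fin 2 → ℝ)).symm ⁻¹' (Set.pi Set.univ (fun _ => Icc (0:ℝ) 1)) := by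
      ext x
      constructor
      · intro h
        simp only [mem_preimage, Set.mem_pi, mem_univ, forall_true_left]
        intro i; exact h i
      · intro h i
        simpa using h i (mem_univ i)
    rw [this, (EuclideanSpace.volume_preserving_symm_measurableEquiv_toLp (Fin 2)).measure_preimage
      ((MeasurableSet.univ_pi (fun _ => measurableSet_Icc)).nullMeasurableSet)]
    rw [volume_pi_pi]; simp
  have hsub : {x : E2 | ∀ i, x i ∈ Icc (0:ℝ) 1} ⊆ Tset ∪ R := by
    intro x hx
    have h0 := hx 0; have h1 := hx 1
    simp only [mem_Icc] at h0 h1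
    by_cases h : x 0 + x 1 ≤ 1
    · exact Or.inl ⟨h0.1, h1.1, h⟩
    · refine Or.inr ?_
      simp only [hR, mem_preimage, hTset, mem_setOf_eq]
      constructor
      · show (0:ℝ) ≤ (pt2 1 1 - x) 0
        have : (pt2 1 1 - x) 0 = 1 - x 0 := rfl
        rw [this]; linarith [h0.2]
      constructor
      · show (0:ℝ) ≤ (pt2 1 1 - x) 1
        have : (pt2 1 1 - x) 1 = 1 - x 1 := rfl
        rw [this]; linarith [h1.2]
      · have e0 : (pt2 1 1 - x) 0 = 1 - x 0 := rfl
        have e1 : (pt2 1 1 - x) 1 = 1 - x 1 := rfl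
        rw [e0, e1]; linarith
  have hRvol : volume R = volume Tset := by
    have : R = Neg.neg ⁻¹' ((fun x : E2 => pt2 1 1 + x) ⁻¹' Tset) := by
      ext x; simp [hR, sub_eq_add_neg]
    rw [this]
    have h1 : Neg.neg ⁻¹' ((fun x : E2 => pt2 1 1 + x) ⁻¹' Tset)
        = -((fun x : E2 => pt2 1 1 + x) ⁻¹' Tset) := rfl
    rw [h1, Measure.measure_neg, measure_preimage_add]
  have h1 : (1:ℝ≥0∞) ≤ volume Tset + volume Tset := by
    calc (1:ℝ≥0∞) = volume {x : E2 | ∀ i, x i ∈ Icc (0:ℝ) 1} := hsq.symm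
    _ ≤ volume (Tset ∪ R) := measure_mono hsub
    _ ≤ volume Tset + volume R := measure_union_le _ _
    _ = volume Tset + volume Tset := by rw [hRvol]
  have h2 : (1:ℝ≥0∞) ≤ 2 * volume Tset := by rwa [two_mul]
  calc ENNReal.ofReal (1/2) = 2⁻¹ := by
        rw [ENNReal.ofReal_div_of_pos (by norm_num)]; norm_num
  _ = 2⁻¹ * 1 := (mul_one _).symm
  _ ≤ 2⁻¹ * (2 * volume Tset) := by exact mul_le_mul_right h2 _
  _ = volume Tset := by rw [← mul_assoc, ENNReal.inv_mul_cancel (by norm_num) (by norm_num), one_mul]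

/-- triangle area lower bound: `vol(conv{a,p,q}) ≥ det/2`. -/
lemma tri_vol (a p q : E2) :
    ENNReal.ofReal (((p 0 - a 0) * (q 1 - a 1) - (p 1 - a 1) * (q 0 - a 0)) / 2)
      ≤ volume (convexHull ℝ ({a, p, q} : Set E2)) := by
  set d : ℝ := (p 0 - a 0) * (q 1 - a 1) - (p 1 - a 1) * (q 0 - a 0) with hd
  rcases le_or_gt d 0 with hd0 | hd0
  · rw [ENNReal.ofReal_eq_zero.mpr (by linarith)]
    exact zero_le
  -- the linear map sending e₀ ↦ p - a, e₁ ↦ q - a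
  set L : E2 →ₗ[ℝ] E2 := (projL 0).smulRight (p - a) + (projL 1).smulRight (q - a) with hL
  have hLapp : ∀ x : E2, L x = x 0 • (p - a) + x 1 • (q - a) := fun x => rfl
  -- determinant of L
  have hdet : LinearMap.det L = d := by
    have hb := LinearMap.det_toMatrix (EuclideanSpace.basisFun (Fin 2) ℝ).toBasis L
    rw [← hb]
    rw [Matrix.det_fin_two]
    have hM : ∀ i j, LinearMap.toMatrix (EuclideanSpace.basisFun (Fin 2) ℝ).toBasis
        (EuclideanSpace.basisFun (Fin 2) ℝ).toBasis L i j = (if j = 0 then p else q) i - a i := by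
      intro i j
      fin_cases j <;>
        simp [LinearMap.toMatrix_apply, hLapp, EuclideanSpace.basisFun_apply]
    rw [hM 0 0, hM 0 1, hM 1 0, hM 1 1]
    simp only [hd]
    norm_num
    ring
  -- image of the standard triangle
  set Tset := {x : E2 | 0 ≤ x 0 ∧ 0 ≤ x 1 ∧ x 0 + x 1 ≤ 1} with hTset
  have himg : (fun x : E2 => a + x) '' (L '' Tset) ⊆ convexHull ℝ ({a, p, q} : Set E2) := by
    rintro - ⟨-, ⟨x, hx, rfl⟩, rfl⟩
    obtain ⟨h0, h1, hs⟩ := hx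
    have hcomb : a + L x = (1 - x 0 - x 1) • a + x 0 • p + x 1 • q := by
      rw [hLapp]; module
    have hconv : Convex ℝ (convexHull ℝ ({a, p, q} : Set E2)) := convex_convexHull ℝ _
    have hmem : (∑ i : Fin 3, (![1 - x 0 - x 1, x 0, x 1] i) • (![a, p, q] i))
        ∈ convexHull ℝ ({a, p, q} : Set E2) := by
      apply hconv.sum_mem
      · intro i _; fin_cases i <;> simp <;> linarith
      · simp [Fin.sum_univ_three]; ring
      · intro i _
        fin_cases i <;> exact subset_convexHull ℝ _ (by simp)
    show a + L x ∈ convexHull ℝ ({a, p, q} : Set E2)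
    rw [hcomb]
    simpa [Fin.sum_univ_three] using hmem
  -- measure computation
  have hmeas : ENNReal.ofReal d * volume Tset ≤ volume (convexHull ℝ ({a, p, q} : Set E2)) := by
    have h1 : volume ((fun x : E2 => a + x) '' (L '' Tset)) = volume (L '' Tset) := by
      have himg2 : (fun x : E2 => a + x) '' (L '' Tset) = (fun x : E2 => -a + x) ⁻¹' (L '' Tset) := by
        ext z
        constructor
        · rintro ⟨w, hw, rfl⟩; simpa using hw
        · intro hz; exact ⟨-a + z, hz, by module⟩
      rw [himg2, measure_preimage_add]
    have h2 : volume (L '' Tset) = ENNReal.ofReal |LinearMap.det L| * volume Tset :=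
      Measure.addHaar_image_linearMap volume L Tset
    calc ENNReal.ofReal d * volume Tset
        = ENNReal.ofReal |LinearMap.det L| * volume Tset := by
          rw [hdet, abs_of_pos hd0]
      _ = volume ((fun x : E2 => a + x) '' (L '' Tset)) := by rw [h1, h2]
      _ ≤ volume (convexHull ℝ ({a, p, q} : Set E2)) := measure_mono himg
  calc ENNReal.ofReal (d / 2) = ENNReal.ofReal d * ENNReal.ofReal (1/2) := by
        rw [← ENNReal.ofReal_mul (le_of_lt hd0)]; ring_nf
    _ ≤ ENNReal.ofReal d * volume Tset := mul_le_mul_right vol_Tset _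
    _ ≤ volume (convexHull ℝ ({a, p, q} : Set E2)) := hmeas
lemma polar_convex (K : Set E2) : Convex ℝ (polarBody2 K) := by
  intro y hy z hz a b ha hb hab
  intro x hx
  have hyx := hy x hx
  have hzx := hz x hx
  rw [inner_add_right, real_inner_smul_right, real_inner_smul_right]
  nlinarith

lemma zero_mem_polar (K : Set E2) : (0:E2) ∈ polarBody2 K := by
  intro x hx; rw [inner_zero_right]; norm_num

lemma neg_mem_polar {K : Set E2} (hsymm : ∀ x ∈ K, -x ∈ K) {y : E2} (hy : y ∈ polarBody2 K) :
    -y ∈ polarBody2 K := by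
  intro x hx
  rw [inner_neg_right, ← inner_neg_left]
  exact hy (-x) (hsymm x hx)

/-- supporting functional at a frontier point -/
lemma exists_support {K : Set E2} (hKclosed : IsClosed K) (hKconv : Convex ℝ K)
    (h0 : (0:E2) ∈ interior K) {z : E2} (hz : z ∈ frontier K) :
    ∃ u ∈ polarBody2 K, ⟪z, u⟫ = 1 := by
  have hzint : z ∉ interior K := hz.2
  obtain ⟨f, hf⟩ := geometric_hahn_banach_open_point hKconv.interior isOpen_interior hzint
  have hf0 : 0 < f z := by have := hf 0 h0; simpa using this
  have hfK : ∀ x ∈ K, f x ≤ f z := by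
    intro x hx
    by_contra hc
    push_neg at hc
    have hfx : 0 < f x := lt_trans hf0 hc
    set τ : ℝ := (f x - f z) / (2 * f x) with hτ
    have ht0 : 0 < τ := div_pos (by linarith) (by linarith)
    have ht1 : τ < 1 := by
      rw [div_lt_one (by linarith)]; linarith
    have hmem : τ • (0:E2) + (1 - τ) • x ∈ interior K := by
      have hsub := hKconv.combo_interior_self_subset_interior (a := τ) (b := 1 - τ)
        ht0 (by linarith) (by ring)
      exact hsub (Set.add_mem_add (smul_mem_smul_set h0) (smul_mem_smul_set hx))
    have hlt := hf _ hmem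
    have hval : f (τ • (0:E2) + (1 - τ) • x) = (1 - τ) * f x := by
      rw [map_add, f.map_smul, f.map_smul]
      simp
    rw [hval] at hlt
    have hτ2 : τ * (2 * f x) = f x - f z := div_mul_cancel₀ _ (by positivity)
    nlinarith
  set w : E2 := (InnerProductSpace.toDual ℝ E2).symm f with hw
  have hwx : ∀ x : E2, ⟪w, x⟫ = f x := fun x => InnerProductSpace.toDual_symm_apply
  refine ⟨(f z)⁻¹ • w, ?_, ?_⟩
  · intro x hx
    rw [real_inner_smul_right, real_inner_comm, hwx]
    have h1 : (f z)⁻¹ * f x ≤ (f z)⁻¹ * f z :=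
      mul_le_mul_of_nonneg_left (hfK x hx) (inv_nonneg.mpr hf0.le)
    rwa [inv_mul_cancel₀ hf0.ne'] at h1
  · rw [real_inner_smul_right, real_inner_comm, hwx, inv_mul_cancel₀ hf0.ne']

/-- the polar body has finite volume when 0 is interior -/
lemma polar_volume_ne_top {K : Set E2} (h0 : (0:E2) ∈ interior K) :
    volume (polarBody2 K) ≠ ⊤ := by
  obtain ⟨ε, hε, hball⟩ := Metric.mem_nhds_iff.mp (mem_interior_iff_mem_nhds.mp h0)
  have hsub : polarBody2 K ⊆ Metric.closedBall 0 (2/ε) := by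
    intro y hy
    rw [Metric.mem_closedBall, dist_zero_right]
    rcases eq_or_ne y 0 with rfl | hy0
    · simp; positivity
    · have hny : 0 < ‖y‖ := norm_pos_iff.mpr hy0
      set x : E2 := ((ε/2) / ‖y‖) • y with hx
      have hxball : x ∈ Metric.ball (0:E2) ε := by
        rw [Metric.mem_ball, dist_zero_right, hx, norm_smul]
        rw [Real.norm_eq_abs, abs_of_pos (by positivity)]
        rw [div_mul_cancel₀ _ hny.ne']
        linarith
      have hxy := hy x (hball hxball)
      rw [hx, real_inner_smul_left, real_inner_self_eq_norm_sq] at hxy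
      have : (ε/2) * ‖y‖ ≤ 1 := by
        have hh : (ε/2) / ‖y‖ * ‖y‖^2 = (ε/2) * ‖y‖ := by field_simp
        linarith [hh ▸ hxy]
      rw [le_div_iff₀ hε]
      nlinarith
  exact ne_top_of_le_ne_top (isCompact_closedBall (0:E2) (2/ε)).measure_lt_top.ne
    (measure_mono hsub)
end MahlerAux

open MahlerAux

set_option maxHeartbeats 2000000 in
/-- Proposition 2.2 (inequality part): if a centrally symmetric convex body `K ⊂ ℝ²` has
`(1,0)` and `(0,1)` on its boundary and the two upper quadrant pieces of `K` each have
area `vol(K)/4`, then `vol(K) · vol(K°) ≥ 8`. -/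
theorem mahler_dim2_normalized
    (K : Set E2) (hKcomp : IsCompact K) (hKconv : Convex ℝ K)
    (hKint : (interior K).Nonempty) (hKsymm : K = -K)
    (hB : pt2 1 0 ∈ frontier K) (hC : pt2 0 1 ∈ frontier K)
    (hK1 : volume (K ∩ {p : E2 | 0 ≤ p 0 ∧ 0 ≤ p 1}) = volume K / 4)
    (hK2 : volume (K ∩ {p : E2 | p 0 ≤ 0 ∧ 0 ≤ p 1}) = volume K / 4) :
    8 ≤ (volume K).toReal * (volume (polarBody2 K)).toReal := by
  classical
  set P := polarBody2 K with hP
  set e₀ : E2 := pt2 1 0 with he₀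
  set e₁ : E2 := pt2 0 1 with he₁
  have hKclosed : IsClosed K := hKcomp.isClosed
  have he₀K : e₀ ∈ K := hKclosed.frontier_subset hB
  have he₁K : e₁ ∈ K := hKclosed.frontier_subset hC
  have hneg : ∀ x ∈ K, -x ∈ K := by
    intro x hx
    exact Set.mem_neg.mp (hKsymm ▸ hx)
  have h0int : (0:E2) ∈ interior K := by
    obtain ⟨a, ha⟩ := hKint
    have hna : -a ∈ interior K := by
      have h := (Homeomorph.neg E2).image_interior K
      have h2 : (Homeomorph.neg E2) '' K = -K := by
        ext x; simp [Set.mem_neg, Homeomorph.neg]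
      rw [h2, ← hKsymm] at h
      rw [← h]
      exact ⟨a, ha, rfl⟩
    have hcomb := hKconv.interior ha hna (a := 1/2) (b := 1/2)
      (by norm_num) (by norm_num) (by norm_num)
    have hzero : (1/2 : ℝ) • a + (1/2 : ℝ) • (-a) = 0 := by module
    rwa [hzero] at hcomb
  have h0K : (0:E2) ∈ K := interior_subset h0int
  -- coordinate facts
  have z0 : (0:E2) 0 = 0 := rfl
  have z1 : (0:E2) 1 = 0 := rfl
  have hE00 : e₀ 0 = 1 := rfl
  have hE01 : e₀ 1 = 0 := rfl
  have hE10 : e₁ 0 = 0 := rfl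
  have hE11 : e₁ 1 = 1 := rfl
  have hN0 : (-e₀) 0 = -1 := by rw [show (-e₀) 0 = -(e₀ 0) from rfl, hE00]
  have hN1 : (-e₀) 1 = 0 := by rw [show (-e₀) 1 = -(e₀ 1) from rfl, hE01]; ring
  have hM0 : (-e₁) 0 = 0 := by rw [show (-e₁) 0 = -(e₁ 0) from rfl, hE10]; ring
  have hM1 : (-e₁) 1 = -1 := by rw [show (-e₁) 1 = -(e₁ 1) from rfl, hE11]
  have hKtop : volume K ≠ ⊤ := hKcomp.measure_lt_top.ne
  set A : ℝ := (volume K).toReal with hA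
  have hdivtop : volume K / 4 ≠ ⊤ := by
    intro h
    rw [ENNReal.div_eq_top] at h
    rcases h with ⟨_, h⟩ | ⟨h, _⟩
    · exact absurd h (by norm_num)
    · exact hKtop h
  have hdivtoReal : (volume K / 4).toReal = A / 4 := by
    rw [ENNReal.toReal_div]
    norm_num
    exact hA.symm
  -- quadrant 1 estimate
  have hQ1 : ∀ x ∈ K, 0 ≤ x 0 → 0 ≤ x 1 → x 0 + x 1 ≤ A / 2 := by
    intro x hx hx0 hx1
    set S := K ∩ {p : E2 | 0 ≤ p 0 ∧ 0 ≤ p 1} with hS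
    have hSconv : Convex ℝ S := by
      apply hKconv.inter
      have he : {p : E2 | 0 ≤ p 0 ∧ 0 ≤ p 1}
          = {p : E2 | 0 ≤ projL 0 p} ∩ {p : E2 | 0 ≤ projL 1 p} := by
        ext p; simp
      rw [he]
      exact (convex_halfSpace_ge (LinearMap.isLinear (projL 0)) 0).inter
        (convex_halfSpace_ge (LinearMap.isLinear (projL 1)) 0)
    have hT : convexHull ℝ ({0, e₀, e₁} : Set E2) ⊆ S := by
      apply convexHull_min _ hSconv
      intro p hp
      rcases hp with rfl | rfl | rfl
      · exact ⟨h0K, by rw [mem_setOf_eq, z0, z1]; norm_num⟩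
      · exact ⟨he₀K, by rw [mem_setOf_eq, hE00, hE01]; norm_num⟩
      · exact ⟨he₁K, by rw [mem_setOf_eq, hE10, hE11]; norm_num⟩
    have hTvol : ENNReal.ofReal (1/2 : ℝ) ≤ volume (convexHull ℝ ({0, e₀, e₁} : Set E2)) := by
      have h := tri_vol 0 e₀ e₁
      have hcoord : ((e₀ 0 - (0:E2) 0) * (e₁ 1 - (0:E2) 1)
          - (e₀ 1 - (0:E2) 1) * (e₁ 0 - (0:E2) 0)) = 1 := by
        rw [hE00, hE01, hE10, hE11, z0, z1]; ring
      rw [hcoord] at h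
      exact h
    have hhalf : (1/2 : ℝ) ≤ A / 4 := by
      have h1 : ENNReal.ofReal (1/2 : ℝ) ≤ volume K / 4 := by
        calc ENNReal.ofReal (1/2 : ℝ) ≤ volume (convexHull ℝ ({0, e₀, e₁} : Set E2)) := hTvol
        _ ≤ volume S := measure_mono hT
        _ = volume K / 4 := hK1
      have h2 := (ENNReal.ofReal_le_iff_le_toReal hdivtop).mp h1
      rwa [hdivtoReal] at h2
    by_cases hc : x 0 + x 1 ≤ 1
    · linarith
    · push_neg at hc
      set Δ := convexHull ℝ ({e₀, x, e₁} : Set E2) with hΔ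
      have hΔS : Δ ⊆ S := by
        apply convexHull_min _ hSconv
        intro p hp
        rcases hp with rfl | rfl | rfl
        · exact ⟨he₀K, by rw [mem_setOf_eq, hE00, hE01]; norm_num⟩
        · exact ⟨hx, ⟨hx0, hx1⟩⟩
        · exact ⟨he₁K, by rw [mem_setOf_eq, hE10, hE11]; norm_num⟩
      have hΔvol : ENNReal.ofReal ((x 0 + x 1 - 1)/2) ≤ volume Δ := by
        have h := tri_vol e₀ x e₁
        have hcoord : ((x 0 - e₀ 0) * (e₁ 1 - e₀ 1) - (x 1 - e₀ 1) * (e₁ 0 - e₀ 0))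
            = x 0 + x 1 - 1 := by
          rw [hE00, hE01, hE10, hE11]; ring
        rw [hcoord] at h
        exact h
      set g : E2 →ₗ[ℝ] ℝ := projL 0 + projL 1 with hg
      have hgapp : ∀ p : E2, g p = p 0 + p 1 := by intro p; simp [hg]
      have hTle : convexHull ℝ ({0, e₀, e₁} : Set E2) ⊆ {p : E2 | g p ≤ 1} := by
        apply convexHull_min _ (convex_halfSpace_le (LinearMap.isLinear g) 1)
        intro p hp
        rcases hp with rfl | rfl | rfl
        · rw [mem_setOf_eq, hgapp, z0, z1]; norm_num
        · rw [mem_setOf_eq, hgapp, hE00, hE01]; norm_num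
        · rw [mem_setOf_eq, hgapp, hE10, hE11]; norm_num
      have hΔge : Δ ⊆ {p : E2 | 1 ≤ g p} := by
        apply convexHull_min _ (convex_halfSpace_ge (LinearMap.isLinear g) 1)
        intro p hp
        rcases hp with rfl | rfl | rfl
        · rw [mem_setOf_eq, hgapp, hE00, hE01]; norm_num
        · rw [mem_setOf_eq, hgapp]; linarith
        · rw [mem_setOf_eq, hgapp, hE10, hE11]; norm_num
      have hnull : volume (convexHull ℝ ({0, e₀, e₁} : Set E2) ∩ Δ) = 0 := by
        apply measure_mono_null _ (null_line g e₀ (by rw [hgapp, hE00, hE01]; norm_num) 1)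
        intro p hp
        exact le_antisymm (hTle hp.1) (hΔge hp.2)
      have hΔmeas : MeasurableSet Δ :=
        ((Set.toFinite _).isCompact_convexHull ℝ).isClosed.measurableSet
      have hunion := measure_union_add_inter (μ := volume)
        (convexHull ℝ ({0, e₀, e₁} : Set E2)) hΔmeas
      rw [hnull, add_zero] at hunion
      have hsum : ENNReal.ofReal (1/2 : ℝ) + ENNReal.ofReal ((x 0 + x 1 - 1)/2)
          ≤ volume K / 4 := by
        calc ENNReal.ofReal (1/2 : ℝ) + ENNReal.ofReal ((x 0 + x 1 - 1)/2)
            ≤ volume (convexHull ℝ ({0, e₀, e₁} : Set E2)) + volume Δ := add_le_add hTvol hΔvol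
        _ = volume (convexHull ℝ ({0, e₀, e₁} : Set E2) ∪ Δ) := hunion.symm
        _ ≤ volume S := measure_mono (Set.union_subset hT hΔS)
        _ = volume K / 4 := hK1
      rw [← ENNReal.ofReal_add (by norm_num) (by linarith)] at hsum
      have h2 := (ENNReal.ofReal_le_iff_le_toReal hdivtop).mp hsum
      rw [hdivtoReal] at h2
      linarith
  -- quadrant 2 estimate
  have hQ2 : ∀ x ∈ K, x 0 ≤ 0 → 0 ≤ x 1 → -(x 0) + x 1 ≤ A / 2 := by
    intro x hx hx0 hx1
    set S := K ∩ {p : E2 | p 0 ≤ 0 ∧ 0 ≤ p 1} with hS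
    have hSconv : Convex ℝ S := by
      apply hKconv.inter
      have he : {p : E2 | p 0 ≤ 0 ∧ 0 ≤ p 1}
          = {p : E2 | projL 0 p ≤ 0} ∩ {p : E2 | 0 ≤ projL 1 p} := by
        ext p; simp
      rw [he]
      exact (convex_halfSpace_le (LinearMap.isLinear (projL 0)) 0).inter
        (convex_halfSpace_ge (LinearMap.isLinear (projL 1)) 0)
    have hme₀K : -e₀ ∈ K := hneg _ he₀K
    have hT : convexHull ℝ ({0, e₁, -e₀} : Set E2) ⊆ S := by
      apply convexHull_min _ hSconv
      intro p hp
      rcases hp with rfl | rfl | rfl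
      · exact ⟨h0K, by rw [mem_setOf_eq, z0, z1]; norm_num⟩
      · exact ⟨he₁K, by rw [mem_setOf_eq, hE10, hE11]; norm_num⟩
      · exact ⟨hme₀K, by rw [mem_setOf_eq, hN0, hN1]; norm_num⟩
    have hTvol : ENNReal.ofReal (1/2 : ℝ) ≤ volume (convexHull ℝ ({0, e₁, -e₀} : Set E2)) := by
      have h := tri_vol 0 e₁ (-e₀)
      have hcoord : ((e₁ 0 - (0:E2) 0) * ((-e₀) 1 - (0:E2) 1)
          - (e₁ 1 - (0:E2) 1) * ((-e₀) 0 - (0:E2) 0)) = 1 := by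
        rw [hE10, hE11, hN0, hN1, z0, z1]; ring
      rw [hcoord] at h
      exact h
    have hhalf : (1/2 : ℝ) ≤ A / 4 := by
      have h1 : ENNReal.ofReal (1/2 : ℝ) ≤ volume K / 4 := by
        calc ENNReal.ofReal (1/2 : ℝ) ≤ volume (convexHull ℝ ({0, e₁, -e₀} : Set E2)) := hTvol
        _ ≤ volume S := measure_mono hT
        _ = volume K / 4 := hK2
      have h2 := (ENNReal.ofReal_le_iff_le_toReal hdivtop).mp h1
      rwa [hdivtoReal] at h2
    by_cases hc : -(x 0) + x 1 ≤ 1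
    · linarith
    · push_neg at hc
      set Δ := convexHull ℝ ({e₁, x, -e₀} : Set E2) with hΔ
      have hΔS : Δ ⊆ S := by
        apply convexHull_min _ hSconv
        intro p hp
        rcases hp with rfl | rfl | rfl
        · exact ⟨he₁K, by rw [mem_setOf_eq, hE10, hE11]; norm_num⟩
        · exact ⟨hx, ⟨hx0, hx1⟩⟩
        · exact ⟨hme₀K, by rw [mem_setOf_eq, hN0, hN1]; norm_num⟩
      have hΔvol : ENNReal.ofReal ((-(x 0) + x 1 - 1)/2) ≤ volume Δ := by
        have h := tri_vol e₁ x (-e₀)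
        have hcoord : ((x 0 - e₁ 0) * ((-e₀) 1 - e₁ 1) - (x 1 - e₁ 1) * ((-e₀) 0 - e₁ 0))
            = -(x 0) + x 1 - 1 := by
          rw [hE10, hE11, hN0, hN1]; ring
        rw [hcoord] at h
        exact h
      set g : E2 →ₗ[ℝ] ℝ := projL 1 - projL 0 with hg
      have hgapp : ∀ p : E2, g p = p 1 - p 0 := by intro p; simp [hg]
      have hTle : convexHull ℝ ({0, e₁, -e₀} : Set E2) ⊆ {p : E2 | g p ≤ 1} := by
        apply convexHull_min _ (convex_halfSpace_le (LinearMap.isLinear g) 1)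
        intro p hp
        rcases hp with rfl | rfl | rfl
        · rw [mem_setOf_eq, hgapp, z0, z1]; norm_num
        · rw [mem_setOf_eq, hgapp, hE10, hE11]; norm_num
        · rw [mem_setOf_eq, hgapp, hN0, hN1]; norm_num
      have hΔge : Δ ⊆ {p : E2 | 1 ≤ g p} := by
        apply convexHull_min _ (convex_halfSpace_ge (LinearMap.isLinear g) 1)
        intro p hp
        rcases hp with rfl | rfl | rfl
        · rw [mem_setOf_eq, hgapp, hE10, hE11]; norm_num
        · rw [mem_setOf_eq, hgapp]; linarith
        · rw [mem_setOf_eq, hgapp, hN0, hN1]; norm_num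
      have hnull : volume (convexHull ℝ ({0, e₁, -e₀} : Set E2) ∩ Δ) = 0 := by
        apply measure_mono_null _ (null_line g e₁ (by rw [hgapp, hE10, hE11]; norm_num) 1)
        intro p hp
        exact le_antisymm (hTle hp.1) (hΔge hp.2)
      have hΔmeas : MeasurableSet Δ :=
        ((Set.toFinite _).isCompact_convexHull ℝ).isClosed.measurableSet
      have hunion := measure_union_add_inter (μ := volume)
        (convexHull ℝ ({0, e₁, -e₀} : Set E2)) hΔmeas
      rw [hnull, add_zero] at hunion
      have hsum : ENNReal.ofReal (1/2 : ℝ) + ENNReal.ofReal ((-(x 0) + x 1 - 1)/2)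
          ≤ volume K / 4 := by
        calc ENNReal.ofReal (1/2 : ℝ) + ENNReal.ofReal ((-(x 0) + x 1 - 1)/2)
            ≤ volume (convexHull ℝ ({0, e₁, -e₀} : Set E2)) + volume Δ := add_le_add hTvol hΔvol
        _ = volume (convexHull ℝ ({0, e₁, -e₀} : Set E2) ∪ Δ) := hunion.symm
        _ ≤ volume S := measure_mono (Set.union_subset hT hΔS)
        _ = volume K / 4 := hK2
      rw [← ENNReal.ofReal_add (by norm_num) (by linarith)] at hsum
      have h2 := (ENNReal.ofReal_le_iff_le_toReal hdivtop).mp hsum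
      rw [hdivtoReal] at h2
      linarith
  -- ℓ¹ bound
  have hupper : ∀ x ∈ K, 0 ≤ x 1 → |x 0| + |x 1| ≤ A / 2 := by
    intro x hx hx1
    rcases le_total 0 (x 0) with h0 | h0
    · rw [abs_of_nonneg h0, abs_of_nonneg hx1]
      exact hQ1 x hx h0 hx1
    · rw [abs_of_nonpos h0, abs_of_nonneg hx1]
      exact hQ2 x hx h0 hx1
  have hl1 : ∀ x ∈ K, |x 0| + |x 1| ≤ A / 2 := by
    intro x hx
    rcases le_total 0 (x 1) with h1 | h1
    · exact hupper x hx h1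
    · have hnx := hupper (-x) (hneg x hx) (by
        show (0:ℝ) ≤ (-x) 1
        rw [show (-x) 1 = -(x 1) from rfl]
        linarith)
      rw [show (-x) 0 = -(x 0) from rfl, show (-x) 1 = -(x 1) from rfl,
        abs_neg, abs_neg] at hnx
      exact hnx
  have hA2 : 2 ≤ A := by
    have h := hl1 e₀ he₀K
    rw [hE00, hE01] at h
    norm_num at h
    linarith
  have hApos : 0 < A := by linarith
  have hAhalf : (0:ℝ) ≤ 2/A := by positivity
  -- corner points
  have hcorner : ∀ w : E2, |w 0| ≤ 1 → |w 1| ≤ 1 → (2/A) • w ∈ P := by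
    intro w hw0 hw1 x hx
    rw [real_inner_smul_right, inner2]
    have h0 : x 0 * w 0 ≤ |x 0| := by
      calc x 0 * w 0 ≤ |x 0 * w 0| := le_abs_self _
      _ = |x 0| * |w 0| := abs_mul _ _
      _ ≤ |x 0| * 1 := by gcongr
      _ = |x 0| := mul_one _
    have h1 : x 1 * w 1 ≤ |x 1| := by
      calc x 1 * w 1 ≤ |x 1 * w 1| := le_abs_self _
      _ = |x 1| * |w 1| := abs_mul _ _
      _ ≤ |x 1| * 1 := by gcongr
      _ = |x 1| := mul_one _
    have hb := hl1 x hx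
    calc 2 / A * (x 0 * w 0 + x 1 * w 1) ≤ 2 / A * (A / 2) := by
          apply mul_le_mul_of_nonneg_left _ hAhalf
          linarith
    _ = 1 := by field_simp
  -- supporting functionals
  obtain ⟨u, huP, hu1⟩ := exists_support hKclosed hKconv h0int hB
  obtain ⟨v, hvP, hv1⟩ := exists_support hKclosed hKconv h0int hC
  have hu0 : u 0 = 1 := by
    rw [inner2, hE00, hE01] at hu1
    linarith
  have hv0 : v 1 = 1 := by
    rw [inner2, hE10, hE11] at hv1
    linarith
  set s : ℝ := u 1 with hs
  set t : ℝ := v 0 with ht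
  have hs1' : -1 ≤ s ∧ s ≤ 1 := by
    constructor
    · have h := huP (-e₁) (hneg _ he₁K)
      rw [inner2, hM0, hM1] at h
      rw [hs]; linarith
    · have h := huP e₁ he₁K
      rw [inner2, hE10, hE11] at h
      rw [hs]; linarith
  have ht1' : -1 ≤ t ∧ t ≤ 1 := by
    constructor
    · have h := hvP (-e₀) (hneg _ he₀K)
      rw [inner2, hN0, hN1] at h
      rw [ht]; linarith
    · have h := hvP e₀ he₀K
      rw [inner2, hE00, hE01] at h
      rw [ht]; linarith
  -- octagon vertices
  set c1 : E2 := (2/A) • pt2 1 1 with hc1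
  set c2 : E2 := (2/A) • pt2 (-1) 1 with hc2
  have hc1P : c1 ∈ P := hcorner _ (by norm_num) (by norm_num)
  have hc2P : c2 ∈ P := hcorner _ (by norm_num) (by norm_num)
  have hc10 : c1 0 = 2/A := by
    show (2/A) * 1 = 2/A
    ring
  have hc11 : c1 1 = 2/A := by
    show (2/A) * 1 = 2/A
    ring
  have hc20 : c2 0 = -(2/A) := by
    show (2/A) * (-1) = -(2/A)
    ring
  have hc21 : c2 1 = 2/A := by
    show (2/A) * 1 = 2/A
    ring
  have hPconv : Convex ℝ P := polar_convex K
  have h0P : (0:E2) ∈ P := zero_mem_polar K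
  have hnegP : ∀ y ∈ P, -y ∈ P := fun y hy => neg_mem_polar hneg hy
  have hnu0 : (-u) 0 = -(u 0) := rfl
  have hnu1 : (-u) 1 = -(u 1) := rfl
  -- the four triangles
  set T1 := convexHull ℝ ({0, u, c1} : Set E2) with hT1
  set T2 := convexHull ℝ ({0, c1, v} : Set E2) with hT2
  set T3 := convexHull ℝ ({0, v, c2} : Set E2) with hT3
  set T4 := convexHull ℝ ({0, c2, -u} : Set E2) with hT4
  have hT1P : T1 ⊆ P := convexHull_min (by
    intro p hp; rcases hp with rfl | rfl | rfl
    exacts [h0P, huP, hc1P]) hPconv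
  have hT2P : T2 ⊆ P := convexHull_min (by
    intro p hp; rcases hp with rfl | rfl | rfl
    exacts [h0P, hc1P, hvP]) hPconv
  have hT3P : T3 ⊆ P := convexHull_min (by
    intro p hp; rcases hp with rfl | rfl | rfl
    exacts [h0P, hvP, hc2P]) hPconv
  have hT4P : T4 ⊆ P := convexHull_min (by
    intro p hp; rcases hp with rfl | rfl | rfl
    exacts [h0P, hc2P, hnegP u huP]) hPconv
  have hT1m : MeasurableSet T1 := ((Set.toFinite _).isCompact_convexHull ℝ).isClosed.measurableSet
  have hT2m : MeasurableSet T2 := ((Set.toFinite _).isCompact_convexHull ℝ).isClosed.measurableSet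
  have hT3m : MeasurableSet T3 := ((Set.toFinite _).isCompact_convexHull ℝ).isClosed.measurableSet
  have hT4m : MeasurableSet T4 := ((Set.toFinite _).isCompact_convexHull ℝ).isClosed.measurableSet
  -- triangle volumes
  have hvol1 : ENNReal.ofReal ((2/A) * (1 - s) / 2) ≤ volume T1 := by
    have h := tri_vol 0 u c1
    have hcoord : ((u 0 - (0:E2) 0) * (c1 1 - (0:E2) 1) - (u 1 - (0:E2) 1) * (c1 0 - (0:E2) 0))
        = (2/A) * (1 - s) := by
      rw [z0, z1, hu0, hc10, hc11, ← hs]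
      ring
    rw [hcoord] at h
    exact h
  have hvol2 : ENNReal.ofReal ((2/A) * (1 - t) / 2) ≤ volume T2 := by
    have h := tri_vol 0 c1 v
    have hcoord : ((c1 0 - (0:E2) 0) * (v 1 - (0:E2) 1) - (c1 1 - (0:E2) 1) * (v 0 - (0:E2) 0))
        = (2/A) * (1 - t) := by
      rw [z0, z1, hv0, hc10, hc11, ← ht]
      ring
    rw [hcoord] at h
    exact h
  have hvol3 : ENNReal.ofReal ((2/A) * (1 + t) / 2) ≤ volume T3 := by
    have h := tri_vol 0 v c2
    have hcoord : ((v 0 - (0:E2) 0) * (c2 1 - (0:E2) 1) - (v 1 - (0:E2) 1) * (c2 0 - (0:E2) 0))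
        = (2/A) * (1 + t) := by
      rw [z0, z1, hv0, hc20, hc21, ← ht]
      ring
    rw [hcoord] at h
    exact h
  have hvol4 : ENNReal.ofReal ((2/A) * (1 + s) / 2) ≤ volume T4 := by
    have h := tri_vol 0 c2 (-u)
    have hcoord : ((c2 0 - (0:E2) 0) * ((-u) 1 - (0:E2) 1)
        - (c2 1 - (0:E2) 1) * ((-u) 0 - (0:E2) 0)) = (2/A) * (1 + s) := by
      rw [z0, z1, hnu0, hnu1, hu0, hc20, hc21, ← hs]
      ring
    rw [hcoord] at h
    exact h
  -- separating lines
  set g1 : E2 →ₗ[ℝ] ℝ := projL 1 - projL 0 with hg1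
  set g2 : E2 →ₗ[ℝ] ℝ := t • projL 1 - projL 0 with hg2
  set g3 : E2 →ₗ[ℝ] ℝ := projL 0 + projL 1 with hg3
  set g4 : E2 →ₗ[ℝ] ℝ := projL 1 - s • projL 0 with hg4
  have hg1app : ∀ p : E2, g1 p = p 1 - p 0 := fun p => by simp [hg1]
  have hg2app : ∀ p : E2, g2 p = t * p 1 - p 0 := fun p => by simp [hg2]
  have hg3app : ∀ p : E2, g3 p = p 0 + p 1 := fun p => by simp [hg3]
  have hg4app : ∀ p : E2, g4 p = p 1 - s * p 0 := fun p => by simp [hg4]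
  -- halfspace containments
  have hT1g1 : T1 ⊆ {p : E2 | g1 p ≤ 0} := by
    apply convexHull_min _ (convex_halfSpace_le (LinearMap.isLinear g1) 0)
    intro p hp
    rcases hp with rfl | rfl | rfl
    · rw [mem_setOf_eq, hg1app, z0, z1]; norm_num
    · rw [mem_setOf_eq, hg1app, hu0, ← hs]; linarith [hs1'.2]
    · rw [mem_setOf_eq, hg1app, hc10, hc11]; norm_num
  have hT2g1 : T2 ⊆ {p : E2 | 0 ≤ g1 p} := by
    apply convexHull_min _ (convex_halfSpace_ge (LinearMap.isLinear g1) 0)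
    intro p hp
    rcases hp with rfl | rfl | rfl
    · rw [mem_setOf_eq, hg1app, z0, z1]; norm_num
    · rw [mem_setOf_eq, hg1app, hc10, hc11]; norm_num
    · rw [mem_setOf_eq, hg1app, hv0, ← ht]; linarith [ht1'.2]
  have hT3g1 : T3 ⊆ {p : E2 | 0 ≤ g1 p} := by
    apply convexHull_min _ (convex_halfSpace_ge (LinearMap.isLinear g1) 0)
    intro p hp
    rcases hp with rfl | rfl | rfl
    · rw [mem_setOf_eq, hg1app, z0, z1]; norm_num
    · rw [mem_setOf_eq, hg1app, hv0, ← ht]; linarith [ht1'.2]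
    · rw [mem_setOf_eq, hg1app, hc20, hc21]; linarith [hAhalf]
  have hT4g1 : T4 ⊆ {p : E2 | 0 ≤ g1 p} := by
    apply convexHull_min _ (convex_halfSpace_ge (LinearMap.isLinear g1) 0)
    intro p hp
    rcases hp with rfl | rfl | rfl
    · rw [mem_setOf_eq, hg1app, z0, z1]; norm_num
    · rw [mem_setOf_eq, hg1app, hc20, hc21]; linarith [hAhalf]
    · rw [mem_setOf_eq, hg1app, hnu0, hnu1, hu0, ← hs]; linarith [hs1'.2]
  have hT2g2 : T2 ⊆ {p : E2 | g2 p ≤ 0} := by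
    apply convexHull_min _ (convex_halfSpace_le (LinearMap.isLinear g2) 0)
    intro p hp
    rcases hp with rfl | rfl | rfl
    · rw [mem_setOf_eq, hg2app, z0, z1]; norm_num
    · rw [mem_setOf_eq, hg2app, hc10, hc11]; nlinarith [ht1'.2, hAhalf]
    · rw [mem_setOf_eq, hg2app, hv0, ← ht]; linarith
  have hT3g2 : T3 ⊆ {p : E2 | 0 ≤ g2 p} := by
    apply convexHull_min _ (convex_halfSpace_ge (LinearMap.isLinear g2) 0)
    intro p hp
    rcases hp with rfl | rfl | rfl
    · rw [mem_setOf_eq, hg2app, z0, z1]; norm_num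
    · rw [mem_setOf_eq, hg2app, hv0, ← ht]; linarith
    · rw [mem_setOf_eq, hg2app, hc20, hc21]; nlinarith [ht1'.1, hAhalf]
  have hT2g3 : T2 ⊆ {p : E2 | 0 ≤ g3 p} := by
    apply convexHull_min _ (convex_halfSpace_ge (LinearMap.isLinear g3) 0)
    intro p hp
    rcases hp with rfl | rfl | rfl
    · rw [mem_setOf_eq, hg3app, z0, z1]; norm_num
    · rw [mem_setOf_eq, hg3app, hc10, hc11]; linarith [hAhalf]
    · rw [mem_setOf_eq, hg3app, hv0, ← ht]; linarith [ht1'.1]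
  have hT3g3 : T3 ⊆ {p : E2 | 0 ≤ g3 p} := by
    apply convexHull_min _ (convex_halfSpace_ge (LinearMap.isLinear g3) 0)
    intro p hp
    rcases hp with rfl | rfl | rfl
    · rw [mem_setOf_eq, hg3app, z0, z1]; norm_num
    · rw [mem_setOf_eq, hg3app, hv0, ← ht]; linarith [ht1'.1]
    · rw [mem_setOf_eq, hg3app, hc20, hc21]; linarith
  have hT4g3 : T4 ⊆ {p : E2 | g3 p ≤ 0} := by
    apply convexHull_min _ (convex_halfSpace_le (LinearMap.isLinear g3) 0)
    intro p hp
    rcases hp with rfl | rfl | rfl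
    · rw [mem_setOf_eq, hg3app, z0, z1]; norm_num
    · rw [mem_setOf_eq, hg3app, hc20, hc21]; linarith
    · rw [mem_setOf_eq, hg3app, hnu0, hnu1, hu0, ← hs]; linarith [hs1'.1]
  have hT1g4 : T1 ⊆ {p : E2 | 0 ≤ g4 p} := by
    apply convexHull_min _ (convex_halfSpace_ge (LinearMap.isLinear g4) 0)
    intro p hp
    rcases hp with rfl | rfl | rfl
    · rw [mem_setOf_eq, hg4app, z0, z1]; norm_num
    · rw [mem_setOf_eq, hg4app, hu0, ← hs]; linarith
    · rw [mem_setOf_eq, hg4app, hc10, hc11]; nlinarith [hs1'.2, hAhalf]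
  have hT2g4 : T2 ⊆ {p : E2 | 0 ≤ g4 p} := by
    apply convexHull_min _ (convex_halfSpace_ge (LinearMap.isLinear g4) 0)
    intro p hp
    rcases hp with rfl | rfl | rfl
    · rw [mem_setOf_eq, hg4app, z0, z1]; norm_num
    · rw [mem_setOf_eq, hg4app, hc10, hc11]; nlinarith [hs1'.2, hAhalf]
    · rw [mem_setOf_eq, hg4app, hv0, ← ht]
      nlinarith [hs1'.1, hs1'.2, ht1'.1, ht1'.2]
  have hT3g4 : T3 ⊆ {p : E2 | 0 ≤ g4 p} := by
    apply convexHull_min _ (convex_halfSpace_ge (LinearMap.isLinear g4) 0)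
    intro p hp
    rcases hp with rfl | rfl | rfl
    · rw [mem_setOf_eq, hg4app, z0, z1]; norm_num
    · rw [mem_setOf_eq, hg4app, hv0, ← ht]
      nlinarith [hs1'.1, hs1'.2, ht1'.1, ht1'.2]
    · rw [mem_setOf_eq, hg4app, hc20, hc21]; nlinarith [hs1'.1, hAhalf]
  have hT4g4 : T4 ⊆ {p : E2 | 0 ≤ g4 p} := by
    apply convexHull_min _ (convex_halfSpace_ge (LinearMap.isLinear g4) 0)
    intro p hp
    rcases hp with rfl | rfl | rfl
    · rw [mem_setOf_eq, hg4app, z0, z1]; norm_num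
    · rw [mem_setOf_eq, hg4app, hc20, hc21]; nlinarith [hs1'.1, hAhalf]
    · rw [mem_setOf_eq, hg4app, hnu0, hnu1, hu0, ← hs]; linarith
  -- null lines
  have hnull1 : volume {p : E2 | g1 p = 0} = 0 :=
    null_line g1 e₁ (by rw [hg1app, hE10, hE11]; norm_num) 0
  have hnull2 : volume {p : E2 | g2 p = 0} = 0 :=
    null_line g2 e₀ (by rw [hg2app, hE00, hE01]; norm_num) 0
  have hnull3 : volume {p : E2 | g3 p = 0} = 0 :=
    null_line g3 e₀ (by rw [hg3app, hE00, hE01]; norm_num) 0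
  have hnull4 : volume {p : E2 | g4 p = 0} = 0 :=
    null_line g4 e₁ (by rw [hg4app, hE10, hE11]; norm_num) 0
  have sep : ∀ (X Y : Set E2) (g : E2 →ₗ[ℝ] ℝ), X ⊆ {p : E2 | g p ≤ 0} →
      Y ⊆ {p : E2 | 0 ≤ g p} → volume {p : E2 | g p = 0} = 0 → volume (X ∩ Y) = 0 := by
    intro X Y g hX hY hnull
    apply measure_mono_null _ hnull
    intro p hp
    exact le_antisymm (hX hp.1) (hY hp.2)
  -- assemble the union
  have h34 : volume (T3 ∪ T4) = volume T3 + volume T4 := by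
    have hnull' : volume (T3 ∩ T4) = 0 := by
      rw [Set.inter_comm]
      exact sep T4 T3 g3 hT4g3 hT3g3 hnull3
    have h := measure_union_add_inter (μ := volume) T3 hT4m
    rw [hnull', add_zero] at h
    exact h
  have h234 : volume (T2 ∪ (T3 ∪ T4)) = volume T2 + (volume T3 + volume T4) := by
    have hnull' : volume (T2 ∩ (T3 ∪ T4)) = 0 := by
      have hsub : T2 ∩ (T3 ∪ T4) ⊆ (T2 ∩ T3) ∪ (T2 ∩ T4) := by
        intro p hp
        rcases hp.2 with h | h
        · exact Or.inl ⟨hp.1, h⟩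
        · exact Or.inr ⟨hp.1, h⟩
      apply measure_mono_null hsub
      apply measure_union_null
      · exact sep T2 T3 g2 hT2g2 hT3g2 hnull2
      · rw [Set.inter_comm]
        exact sep T4 T2 g3 hT4g3 hT2g3 hnull3
    have h := measure_union_add_inter (μ := volume) T2 (hT3m.union hT4m)
    rw [hnull', add_zero, h34] at h
    exact h
  have h1234 : volume (T1 ∪ (T2 ∪ (T3 ∪ T4)))
      = volume T1 + (volume T2 + (volume T3 + volume T4)) := by
    have hnull' : volume (T1 ∩ (T2 ∪ (T3 ∪ T4))) = 0 := by
      have hsub : T1 ∩ (T2 ∪ (T3 ∪ T4)) ⊆ {p : E2 | g1 p = 0} := by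
        intro p hp
        have hle : g1 p ≤ 0 := hT1g1 hp.1
        have hge : 0 ≤ g1 p := by
          rcases hp.2 with h | h | h
          · exact hT2g1 h
          · exact hT3g1 h
          · exact hT4g1 h
        exact le_antisymm hle hge
      exact measure_mono_null hsub hnull1
    have h := measure_union_add_inter (μ := volume) T1 ((hT2m.union (hT3m.union hT4m)))
    rw [hnull', add_zero, h234] at h
    exact h
  set B := T1 ∪ (T2 ∪ (T3 ∪ T4)) with hBdef
  have hBP : B ⊆ P := by
    intro p hp
    rcases hp with h | h | h | h
    · exact hT1P h
    · exact hT2P h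
    · exact hT3P h
    · exact hT4P h
  have hBm : MeasurableSet B := hT1m.union (hT2m.union (hT3m.union hT4m))
  have hBg4 : B ⊆ {p : E2 | 0 ≤ g4 p} := by
    intro p hp
    rcases hp with h | h | h | h
    · exact hT1g4 h
    · exact hT2g4 h
    · exact hT3g4 h
    · exact hT4g4 h
  have hnegBP : -B ⊆ P := by
    intro x hx
    have hxB : -x ∈ B := Set.mem_neg.mp hx
    have := hnegP (-x) (hBP hxB)
    rwa [neg_neg] at this
  have hnegBm : MeasurableSet (-B) := hBm.neg
  have hBneg : volume (-B) = volume B := Measure.measure_neg volume B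
  have hinter0 : volume (B ∩ -B) = 0 := by
    apply measure_mono_null _ hnull4
    intro p hp
    have h1 : 0 ≤ g4 p := hBg4 hp.1
    have h2 : 0 ≤ g4 (-p) := hBg4 (Set.mem_neg.mp hp.2)
    rw [map_neg] at h2
    exact le_antisymm (by linarith) h1
  have hunionB := measure_union_add_inter (μ := volume) B hnegBm
  rw [hinter0, add_zero, hBneg] at hunionB
  -- lower bound for volume of B
  have hd1 : (0:ℝ) ≤ (2/A) * (1 - s) / 2 :=
    div_nonneg (mul_nonneg hAhalf (by linarith [hs1'.2])) (by norm_num)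
  have hd2 : (0:ℝ) ≤ (2/A) * (1 - t) / 2 :=
    div_nonneg (mul_nonneg hAhalf (by linarith [ht1'.2])) (by norm_num)
  have hd3 : (0:ℝ) ≤ (2/A) * (1 + t) / 2 :=
    div_nonneg (mul_nonneg hAhalf (by linarith [ht1'.1])) (by norm_num)
  have hd4 : (0:ℝ) ≤ (2/A) * (1 + s) / 2 :=
    div_nonneg (mul_nonneg hAhalf (by linarith [hs1'.1])) (by norm_num)
  have hDsum : (2/A) * (1 - s) / 2 + ((2/A) * (1 - t) / 2 + ((2/A) * (1 + t) / 2
      + (2/A) * (1 + s) / 2)) = 4 / A := by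
    field_simp
    ring
  have hD : ENNReal.ofReal (4 / A) ≤ volume B := by
    calc ENNReal.ofReal (4 / A)
        = ENNReal.ofReal ((2/A) * (1 - s) / 2 + ((2/A) * (1 - t) / 2 + ((2/A) * (1 + t) / 2
            + (2/A) * (1 + s) / 2))) := by rw [hDsum]
      _ = ENNReal.ofReal ((2/A) * (1 - s) / 2) + (ENNReal.ofReal ((2/A) * (1 - t) / 2)
            + (ENNReal.ofReal ((2/A) * (1 + t) / 2) + ENNReal.ofReal ((2/A) * (1 + s) / 2))) := by
          rw [ENNReal.ofReal_add hd1 (by linarith), ENNReal.ofReal_add hd2 (by linarith),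
            ENNReal.ofReal_add hd3 hd4]
      _ ≤ volume T1 + (volume T2 + (volume T3 + volume T4)) :=
          add_le_add hvol1 (add_le_add hvol2 (add_le_add hvol3 hvol4))
      _ = volume B := h1234.symm
  have hPvol : ENNReal.ofReal (8 / A) ≤ volume P := by
    calc ENNReal.ofReal (8 / A) = ENNReal.ofReal (4 / A) + ENNReal.ofReal (4 / A) := by
          rw [← ENNReal.ofReal_add (by positivity) (by positivity)]
          congr 1
          ring
      _ ≤ volume B + volume B := add_le_add hD hD
      _ = volume (B ∪ -B) := hunionB.symm
      _ ≤ volume P := measure_mono (Set.union_subset hBP hnegBP)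
  have hPtop : volume P ≠ ⊤ := polar_volume_ne_top h0int
  have h8A : 8 / A ≤ (volume P).toReal := (ENNReal.ofReal_le_iff_le_toReal hPtop).mp hPvol
  have hfinal : 8 ≤ A * (volume P).toReal := by
    have h := mul_le_mul_of_nonneg_left h8A (le_of_lt hApos)
    rw [show A * (8 / A) = 8 by field_simp] at h
    exact h
  exact hfinal
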